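/- For positive definite matrices A and B, the harmonic mean 2(A^{-1}+B^{-1})^{-1} is dominated in the Löwner order by the geometric mean A # B = A^{1/2}(A^{-1/2} B A^{-1/2})^{1/2} A^{1/2}, which in turn is dominated by the arithmetic mean (A+B)/2. -/

import Mathlib

open scoped ComplexOrder
open Matrix

/-- The `t`-th power of a Hermitian matrix, defined via the spectral decomposition
(functional calculus with the real power function). -/
noncomputable def psdPow {n : ℕ} (A : Matrix (Fin n) (Fin n) ℂ) (hA : A.IsHermitian) (t : ℝ) :
    Matrix (Fin n) (Fin n) ℂ :=
  (hA.eigenvectorUnitary : Matrix (Fin n) (Fin n) ℂ) *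
    Matrix.diagonal (fun i => ((hA.eigenvalues i ^ t : ℝ) : ℂ)) *
    (hA.eigenvectorUnitary : Matrix (Fin n) (Fin n) ℂ)ᴴ

lemma psdPow_isHermitian {n : ℕ} (A : Matrix (Fin n) (Fin n) ℂ) (hA : A.IsHermitian) (t : ℝ) :
    (psdPow A hA t).IsHermitian := by
  unfold psdPow
  apply Matrix.isHermitian_mul_mul_conjTranspose
  rw [Matrix.isHermitian_diagonal_iff]
  intro i
  exact Complex.conj_ofReal _

lemma isHermitian_conj {n : ℕ} {C B : Matrix (Fin n) (Fin n) ℂ}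
    (hC : C.IsHermitian) (hB : B.IsHermitian) : (C * B * C).IsHermitian := by
  have := Matrix.isHermitian_mul_mul_conjTranspose C hB
  rwa [hC] at this

/-- The α-weighted geometric mean `A #_α B = A^{1/2} (A^{-1/2} B A^{-1/2})^α A^{1/2}`
of Hermitian (in applications, positive definite) matrices, where `A^{-1/2} = A^{(-1/2)}`
via functional calculus. -/
noncomputable def wGeomMean {n : ℕ} (A B : Matrix (Fin n) (Fin n) ℂ)
    (hA : A.IsHermitian) (hB : B.IsHermitian) (α : ℝ) : Matrix (Fin n) (Fin n) ℂ :=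
  psdPow A hA (1/2) *
    psdPow (psdPow A hA (-(1/2)) * B * psdPow A hA (-(1/2)))
      (isHermitian_conj (psdPow_isHermitian A hA (-(1/2))) hB) α *
    psdPow A hA (1/2)

lemma wGeomMean_isHermitian {n : ℕ} (A B : Matrix (Fin n) (Fin n) ℂ)
    (hA : A.IsHermitian) (hB : B.IsHermitian) (α : ℝ) : (wGeomMean A B hA hB α).IsHermitian :=
  isHermitian_conj (psdPow_isHermitian A hA (1/2)) (psdPow_isHermitian _ _ α)


section AuxHelpers

variable {n : ℕ}

lemma unit_star_mul (U : Matrix.unitaryGroup (Fin n) ℂ) :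
    (U : Matrix (Fin n) (Fin n) ℂ)ᴴ * (U : Matrix (Fin n) (Fin n) ℂ) = 1 := by
  rw [← Matrix.star_eq_conjTranspose]
  exact Matrix.UnitaryGroup.star_mul_self U

lemma unit_mul_star (U : Matrix.unitaryGroup (Fin n) ℂ) :
    (U : Matrix (Fin n) (Fin n) ℂ) * (U : Matrix (Fin n) (Fin n) ℂ)ᴴ = 1 := by
  rw [← Matrix.star_eq_conjTranspose]
  exact Matrix.mem_unitaryGroup_iff.mp U.2

noncomputable def uconj (U : Matrix.unitaryGroup (Fin n) ℂ) (f : Fin n → ℝ) :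
    Matrix (Fin n) (Fin n) ℂ :=
  (U : Matrix (Fin n) (Fin n) ℂ) * Matrix.diagonal (fun i => ((f i : ℝ) : ℂ)) *
    (U : Matrix (Fin n) (Fin n) ℂ)ᴴ

lemma uconj_mul (U : Matrix.unitaryGroup (Fin n) ℂ) (f g : Fin n → ℝ) :
    uconj U f * uconj U g = uconj U (f * g) := by
  unfold uconj
  simp only [Matrix.mul_assoc]
  rw [← Matrix.mul_assoc ((U : Matrix (Fin n) (Fin n) ℂ)ᴴ), unit_star_mul, Matrix.one_mul,
    ← Matrix.mul_assoc (Matrix.diagonal _), Matrix.diagonal_mul_diagonal]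
  simp

lemma uconj_add (U : Matrix.unitaryGroup (Fin n) ℂ) (f g : Fin n → ℝ) :
    uconj U f + uconj U g = uconj U (f + g) := by
  unfold uconj
  rw [← Matrix.add_mul, ← Matrix.mul_add, Matrix.diagonal_add]
  simp

lemma uconj_sub (U : Matrix.unitaryGroup (Fin n) ℂ) (f g : Fin n → ℝ) :
    uconj U f - uconj U g = uconj U (f - g) := by
  unfold uconj
  rw [← Matrix.sub_mul, ← Matrix.mul_sub, Matrix.diagonal_sub]
  simp

lemma uconj_smul (U : Matrix.unitaryGroup (Fin n) ℂ) (c : ℝ) (f : Fin n → ℝ) :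
    ((c : ℂ)) • uconj U f = uconj U (c • f) := by
  have h : Matrix.diagonal (fun i => (((c • f) i : ℝ) : ℂ)) =
      (c : ℂ) • Matrix.diagonal (fun i => ((f i : ℝ) : ℂ)) := by
    rw [← Matrix.diagonal_smul]
    apply congrArg Matrix.diagonal
    funext i
    simp
  unfold uconj
  rw [h, mul_smul_comm, smul_mul_assoc]

lemma uconj_one (U : Matrix.unitaryGroup (Fin n) ℂ) :
    uconj U 1 = 1 := by
  unfold uconj
  simp [unit_mul_star U]

lemma uconj_inv (U : Matrix.unitaryGroup (Fin n) ℂ) (f : Fin n → ℝ) (hf : ∀ i, f i ≠ 0) :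
    (uconj U f)⁻¹ = uconj U f⁻¹ := by
  apply Matrix.inv_eq_right_inv
  rw [uconj_mul]
  rw [show f * f⁻¹ = 1 from funext fun i => mul_inv_cancel₀ (hf i)]
  exact uconj_one U

lemma uconj_posSemidef (U : Matrix.unitaryGroup (Fin n) ℂ) (f : Fin n → ℝ)
    (hf : ∀ i, 0 ≤ f i) : (uconj U f).PosSemidef := by
  apply Matrix.PosSemidef.mul_mul_conjTranspose_same
  rw [Matrix.posSemidef_diagonal_iff]
  intro i
  simpa using hf i

end AuxHelpers

section PsdPowAux

variable {n : ℕ}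

lemma psdPow_eq_uconj {A : Matrix (Fin n) (Fin n) ℂ} (hA : A.IsHermitian) (t : ℝ) :
    psdPow A hA t = uconj hA.eigenvectorUnitary (fun i => hA.eigenvalues i ^ t) := rfl

lemma spectral_uconj {A : Matrix (Fin n) (Fin n) ℂ} (hA : A.IsHermitian) :
    A = uconj hA.eigenvectorUnitary hA.eigenvalues := by
  conv_lhs => rw [hA.spectral_theorem]
  rfl

lemma posDef_conj {S B R : Matrix (Fin n) (Fin n) ℂ} (hB : B.PosDef) (hS : Sᴴ = S)
    (hRS : R * S = 1) : (S * B * S).PosDef := by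
  refine Matrix.PosDef.of_dotProduct_mulVec_pos ?_ (fun x hx => ?_)
  · have := Matrix.isHermitian_mul_mul_conjTranspose S hB.1
    rwa [hS] at this
  · have h1 : S *ᵥ x ≠ 0 := by
      intro h
      apply hx
      have h2 : (R * S) *ᵥ x = x := by rw [hRS, Matrix.one_mulVec]
      rw [← Matrix.mulVec_mulVec, h, Matrix.mulVec_zero] at h2
      exact h2.symm
    have h3 := hB.dotProduct_mulVec_pos h1
    have e : S * B * S = Sᴴ * B * S := by rw [hS]
    rw [e]
    simpa only [Matrix.star_mulVec, Matrix.dotProduct_mulVec, Matrix.vecMul_vecMul] using h3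

lemma conj_inv' (P Q C D : Matrix (Fin n) (Fin n) ℂ)
    (hQP : Q * P = 1) (hDC : D * C = 1) :
    (P * C * P)⁻¹ = Q * D * Q := by
  apply Matrix.inv_eq_left_inv
  have h1 : ∀ Y, Q * (P * Y) = Y := fun Y => by rw [← Matrix.mul_assoc, hQP, Matrix.one_mul]
  have h2 : ∀ Y, D * (C * Y) = Y := fun Y => by rw [← Matrix.mul_assoc, hDC, Matrix.one_mul]
  simp only [Matrix.mul_assoc, h1, h2, hQP]

lemma conj_smul' (R : Matrix (Fin n) (Fin n) ℂ) (c : ℂ) (P : Matrix (Fin n) (Fin n) ℂ) :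
    c • (R * P * R) = R * (c • P) * R := by
  rw [mul_smul_comm, smul_mul_assoc]

lemma conj_sub' (R P Q : Matrix (Fin n) (Fin n) ℂ) :
    R * P * R - R * Q * R = R * (P - Q) * R := by
  noncomm_ring

lemma conj_add' (R P Q : Matrix (Fin n) (Fin n) ℂ) :
    R * P * R + R * Q * R = R * (P + Q) * R := by
  noncomm_ring

end PsdPowAux

section TwoGoals
variable {n : ℕ}

lemma scalar1 {x : ℝ} (hx : 0 < x) : 0 ≤ x ^ (1/2 : ℝ) - 2 * (1 + x⁻¹)⁻¹ := by
  set s := x ^ (1/2 : ℝ) with hs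
  have hspos : 0 < s := Real.rpow_pos_of_pos hx _
  have hs2 : s * s = x := by
    rw [hs, ← Real.rpow_add hx]; norm_num
  have h1 : (0:ℝ) < 1 + x := by linarith
  have hinv : (1 + x⁻¹) = (1 + x) / x := by field_simp; ring
  rw [hinv, inv_div]
  rw [sub_nonneg, show 2 * (x / (1 + x)) = (2 * x) / (1 + x) by ring, div_le_iff₀ h1]
  nlinarith [mul_nonneg hspos.le (sq_nonneg (s - 1)), hs2]

lemma scalar2 {x : ℝ} (hx : 0 < x) : 0 ≤ 2⁻¹ * (1 + x) - x ^ (1/2 : ℝ) := by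
  have hspos : 0 < x ^ (1/2:ℝ) := Real.rpow_pos_of_pos hx _
  have hs2 : x ^ (1/2:ℝ) * x ^ (1/2:ℝ) = x := by
    rw [← Real.rpow_add hx]; norm_num
  nlinarith [sq_nonneg (x ^ (1/2:ℝ) - 1)]

end TwoGoals

lemma two_goals {n : ℕ} (A B R S X G : Matrix (Fin n) (Fin n) ℂ)
    (V : Matrix.unitaryGroup (Fin n) ℂ) (μ : Fin n → ℝ)
    (hμ : ∀ i, 0 < μ i)
    (hRherm : Rᴴ = R)
    (hRS : R * S = 1) (hSR : S * R = 1)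
    (hRR : R * R = A)
    (hXu : X = uconj V μ)
    (hBX : B = R * X * R)
    (hG : G = R * uconj V (fun i => μ i ^ (1/2 : ℝ)) * R) :
    (G - (2 : ℂ) • (A⁻¹ + B⁻¹)⁻¹).PosSemidef ∧
    ((1/2 : ℂ) • (A + B) - G).PosSemidef := by
  have cR : ∀ Y, R * (S * Y) = Y := fun Y => by rw [← Matrix.mul_assoc, hRS, Matrix.one_mul]
  have cS : ∀ Y, S * (R * Y) = Y := fun Y => by rw [← Matrix.mul_assoc, hSR, Matrix.one_mul]
  -- inverses
  have hAinv : A⁻¹ = S * S := by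
    apply Matrix.inv_eq_left_inv
    rw [← hRR, Matrix.mul_assoc, cS R, hSR]
  have huinv : uconj V μ⁻¹ * uconj V μ = 1 := by
    rw [uconj_mul, show μ⁻¹ * μ = 1 from funext fun i => inv_mul_cancel₀ (hμ i).ne']
    exact uconj_one V
  have hBinv : B⁻¹ = S * uconj V μ⁻¹ * S := by
    rw [hBX, hXu]
    exact conj_inv' R S (uconj V μ) (uconj V μ⁻¹) hSR huinv
  have hsum : A⁻¹ + B⁻¹ = S * uconj V (1 + μ⁻¹) * S := by
    rw [hAinv, hBinv, ← uconj_add, uconj_one]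
    noncomm_ring
  have hposf : ∀ i, (0:ℝ) < (1 + μ⁻¹) i := fun i => by
    have := hμ i
    have : 0 < (μ i)⁻¹ := inv_pos.mpr this
    simp only [Pi.add_apply, Pi.inv_apply, Pi.one_apply]
    linarith
  have hfinv : uconj V (1 + μ⁻¹)⁻¹ * uconj V (1 + μ⁻¹) = 1 := by
    rw [uconj_mul, show (1 + μ⁻¹)⁻¹ * (1 + μ⁻¹) = 1 from
      funext fun i => inv_mul_cancel₀ (hposf i).ne']
    exact uconj_one V
  have hsuminv : (A⁻¹ + B⁻¹)⁻¹ = R * uconj V (1 + μ⁻¹)⁻¹ * R := by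
    rw [hsum]
    exact conj_inv' S R (uconj V (1 + μ⁻¹)) (uconj V (1 + μ⁻¹)⁻¹) hRS hfinv
  have e1 : (2 : ℂ) • (A⁻¹ + B⁻¹)⁻¹ = R * uconj V ((2:ℝ) • (1 + μ⁻¹)⁻¹) * R := by
    rw [hsuminv, ← uconj_smul, ← conj_smul']
    norm_num
  have hAeq : A = R * uconj V 1 * R := by rw [uconj_one, Matrix.mul_one, hRR]
  have key1 : G - (2 : ℂ) • (A⁻¹ + B⁻¹)⁻¹ =
      R * uconj V ((fun i => μ i ^ (1/2 : ℝ)) - (2:ℝ) • (1 + μ⁻¹)⁻¹) * R := by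
    rw [hG, e1, ← uconj_sub, ← conj_sub']
  have key2 : (1/2 : ℂ) • (A + B) - G =
      R * uconj V ((2⁻¹:ℝ) • (1 + μ) - fun i => μ i ^ (1/2 : ℝ)) * R := by
    rw [hAeq, hBX, hXu, hG, ← uconj_sub, ← uconj_smul, ← uconj_add, ← conj_sub',
      ← conj_smul', ← conj_add']
    norm_num
  constructor
  · rw [key1]
    have hnn : ∀ i, 0 ≤ ((fun i => μ i ^ (1/2 : ℝ)) - (2:ℝ) • (1 + μ⁻¹)⁻¹) i := fun i => by
      simpa using scalar1 (hμ i)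
    have := (uconj_posSemidef V _ hnn).mul_mul_conjTranspose_same R
    rwa [hRherm] at this
  · rw [key2]
    have hnn : ∀ i, 0 ≤ ((2⁻¹:ℝ) • (1 + μ) - fun i => μ i ^ (1/2 : ℝ)) i := fun i => by
      have h := scalar2 (hμ i)
      simp only [Pi.sub_apply, Pi.smul_apply, Pi.add_apply, Pi.one_apply, smul_eq_mul]
      norm_num at h ⊢
      linarith
    have := (uconj_posSemidef V _ hnn).mul_mul_conjTranspose_same R
    rwa [hRherm] at this

lemma psdPow_zero'' {n : ℕ} {A : Matrix (Fin n) (Fin n) ℂ} (hA : A.IsHermitian) :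
    psdPow A hA 0 = 1 := by
  rw [psdPow_eq_uconj, show (fun i => hA.eigenvalues i ^ (0:ℝ)) = 1 from
    funext fun i => by simp, uconj_one]

lemma psdPow_one'' {n : ℕ} {A : Matrix (Fin n) (Fin n) ℂ} (hA : A.IsHermitian) :
    psdPow A hA 1 = A := by
  rw [psdPow_eq_uconj, show (fun i => hA.eigenvalues i ^ (1:ℝ)) = hA.eigenvalues from
    funext fun i => Real.rpow_one _]
  exact (spectral_uconj hA).symm

lemma psdPow_mul'' {n : ℕ} {A : Matrix (Fin n) (Fin n) ℂ} (hA : A.PosDef) (s t : ℝ) :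
    psdPow A hA.1 s * psdPow A hA.1 t = psdPow A hA.1 (s + t) := by
  rw [psdPow_eq_uconj, psdPow_eq_uconj, psdPow_eq_uconj, uconj_mul]
  apply congrArg (uconj hA.1.eigenvectorUnitary)
  funext i
  exact (Real.rpow_add (hA.eigenvalues_pos i) s t).symm

/-- For positive definite matrices `A` and `B`, the harmonic mean `2(A⁻¹+B⁻¹)⁻¹` is
dominated in the Löwner order by the geometric mean `A # B`, which in turn is dominated by
the arithmetic mean `(A+B)/2`. -/
theorem harmonic_le_geom_le_arithmetic {n : ℕ} (A B : Matrix (Fin n) (Fin n) ℂ)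
    (hA : A.PosDef) (hB : B.PosDef) :
    (wGeomMean A B hA.1 hB.1 (1/2) - (2 : ℂ) • (A⁻¹ + B⁻¹)⁻¹).PosSemidef ∧
    ((1/2 : ℂ) • (A + B) - wGeomMean A B hA.1 hB.1 (1/2)).PosSemidef     := by
  have hRS : psdPow A hA.1 (1/2) * psdPow A hA.1 (-(1/2)) = 1 := by
    rw [psdPow_mul'' hA, show (1/2 + -(1/2) : ℝ) = 0 by norm_num, psdPow_zero'']
  have hSR : psdPow A hA.1 (-(1/2)) * psdPow A hA.1 (1/2) = 1 := by
    rw [psdPow_mul'' hA, show (-(1/2) + 1/2 : ℝ) = 0 by norm_num, psdPow_zero'']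
  have hRR : psdPow A hA.1 (1/2) * psdPow A hA.1 (1/2) = A := by
    rw [psdPow_mul'' hA, show (1/2 + 1/2 : ℝ) = 1 by norm_num, psdPow_one'']
  have hXH : (psdPow A hA.1 (-(1/2)) * B * psdPow A hA.1 (-(1/2))).IsHermitian :=
    isHermitian_conj (psdPow_isHermitian A hA.1 (-(1/2))) hB.1
  have hX : (psdPow A hA.1 (-(1/2)) * B * psdPow A hA.1 (-(1/2))).PosDef :=
    posDef_conj hB (psdPow_isHermitian A hA.1 (-(1/2))) hRS
  have cR : ∀ Y, psdPow A hA.1 (1/2) * (psdPow A hA.1 (-(1/2)) * Y) = Y := fun Y => by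
    rw [← Matrix.mul_assoc, hRS, Matrix.one_mul]
  have hBX : B = psdPow A hA.1 (1/2) *
      (psdPow A hA.1 (-(1/2)) * B * psdPow A hA.1 (-(1/2))) * psdPow A hA.1 (1/2) := by
    symm
    simp only [Matrix.mul_assoc]
    rw [hSR, Matrix.mul_one, cR]
  exact two_goals A B _ _ _ _ hXH.eigenvectorUnitary hXH.eigenvalues
    (fun i => hX.eigenvalues_pos i) (psdPow_isHermitian A hA.1 (1/2)) hRS hSR hRR
    (spectral_uconj hXH) hBX rfl
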